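/- Let p be an odd prime, e ≥ 1, n = p^e, 1 ≤ f ≤ e. The commutator subgroup of G_f = ⟨g, h | g^n = h^n = 1, g⁻¹hg = h^(1+p^f)⟩ equals ⟨h^(p^f)⟩, a cyclic group of order p^(e-f); consequently the abelianization of G_f is isomorphic to C_n × C_(p^f). -/

import Mathlib

/-- The relations for the group `G_f = ⟨g, h | g^n = h^n = 1, g⁻¹hg = h^q⟩`. -/
def fermatRels (n q : ℕ) : Set (FreeGroup (Fin 2)) :=
  {FreeGroup.of 0 ^ n, FreeGroup.of 1 ^ n,
   (FreeGroup.of 0)⁻¹ * FreeGroup.of 1 * FreeGroup.of 0 * (FreeGroup.of 1 ^ q)⁻¹}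

/-- The group `G_f` (with `n = p^e`, `q = 1 + p^f`). -/
abbrev Gf (n q : ℕ) := PresentedGroup (fermatRels n q)

/-- The generator `g` of `G_f`. -/
def gGen (n q : ℕ) : Gf n q := PresentedGroup.of 0

/-- The generator `h` of `G_f`. -/
def hGen (n q : ℕ) : Gf n q := PresentedGroup.of 1

section AuxFermat

variable {n q : ℕ}

private lemma fermat_mk_eq_one {r : FreeGroup (Fin 2)} (h : r ∈ fermatRels n q) :
    PresentedGroup.mk (fermatRels n q) r = 1 :=
  (QuotientGroup.eq_one_iff r).mpr (Subgroup.subset_normalClosure h)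

lemma fermat_relg : gGen n q ^ n = 1 := by
  have h := fermat_mk_eq_one (n := n) (q := q)
    (show FreeGroup.of 0 ^ n ∈ fermatRels n q from Set.mem_insert _ _)
  rw [map_pow] at h
  exact h

lemma fermat_relh : hGen n q ^ n = 1 := by
  have h := fermat_mk_eq_one (n := n) (q := q)
    (show FreeGroup.of 1 ^ n ∈ fermatRels n q from
      Set.mem_insert_of_mem _ (Set.mem_insert _ _))
  rw [map_pow] at h
  exact h

lemma fermat_relc : (gGen n q)⁻¹ * hGen n q * gGen n q = hGen n q ^ q := by
  have h := fermat_mk_eq_one (n := n) (q := q)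
    (show (FreeGroup.of 0)⁻¹ * FreeGroup.of 1 * FreeGroup.of 0 * (FreeGroup.of 1 ^ q)⁻¹
        ∈ fermatRels n q from
      Set.mem_insert_of_mem _ (Set.mem_insert_of_mem _ rfl))
  rw [map_mul, map_mul, map_mul, map_inv, map_inv, map_pow] at h
  exact mul_inv_eq_one.mp h

lemma fermat_conj_zpow (m : ℤ) :
    (gGen n q)⁻¹ * hGen n q ^ m * gGen n q = hGen n q ^ ((q : ℤ) * m) := by
  have h1 : ((gGen n q)⁻¹ * hGen n q * ((gGen n q)⁻¹)⁻¹) ^ m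
      = (gGen n q)⁻¹ * hGen n q ^ m * ((gGen n q)⁻¹)⁻¹ := conj_zpow
  rw [inv_inv] at h1
  rw [← h1, fermat_relc, ← zpow_natCast (hGen n q) q, ← zpow_mul]

lemma fermat_closure :
    Subgroup.closure ({gGen n q, hGen n q} : Set (Gf n q)) = ⊤ := by
  rw [← PresentedGroup.closure_range_of (fermatRels n q)]
  congr 1
  ext x
  simp only [Set.mem_insert_iff, Set.mem_singleton_iff, Set.mem_range]
  constructor
  · rintro (rfl | rfl)
    exacts [⟨0, rfl⟩, ⟨1, rfl⟩]
  · rintro ⟨i, rfl⟩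
    fin_cases i
    · exact Or.inl rfl
    · exact Or.inr rfl

lemma fermat_dvd_geom {p : ℕ} {x : ℤ} (h : (p : ℤ) ∣ x - 1) :
    (p : ℤ) ∣ ∑ i ∈ Finset.range p, x ^ i := by
  have h2 : ∑ i ∈ Finset.range p, x ^ i
      = (∑ i ∈ Finset.range p, (x ^ i - 1)) + p := by
    rw [Finset.sum_sub_distrib, Finset.sum_const, Finset.card_range]
    push_cast
    ring
  rw [h2]
  refine dvd_add (Finset.dvd_sum fun i _ => h.trans ?_) dvd_rfl
  simpa using sub_dvd_pow_sub_pow x 1 i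

lemma fermat_step {p m : ℕ} (hm : m ≠ 0) {x : ℤ} (h : (p : ℤ) ^ m ∣ x - 1) :
    (p : ℤ) ^ (m + 1) ∣ x ^ p - 1 := by
  have h1 : (p : ℤ) ∣ x - 1 := (dvd_pow_self (p : ℤ) hm).trans h
  have h2 := fermat_dvd_geom h1
  rw [← geom_sum_mul x p, pow_succ']
  exact mul_dvd_mul h2 h

lemma fermat_key (p f : ℕ) (hf : f ≠ 0) :
    ∀ k : ℕ, (p : ℤ) ^ (f + k) ∣ (1 + (p : ℤ) ^ f) ^ p ^ k - 1
  | 0 => by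
      simp only [pow_zero, pow_one, Nat.add_zero]
      have h : (1 : ℤ) + (p : ℤ) ^ f - 1 = (p : ℤ) ^ f := by ring
      rw [h]
  | (k + 1) => by
      have ih := fermat_key p f hf k
      have h2 := fermat_step (m := f + k) (by omega) ih
      rw [← pow_mul, ← pow_succ] at h2
      rw [← add_assoc]
      exact h2

lemma fermat_q_pow (p e f : ℕ) (hf1 : 1 ≤ f) (hfe : f ≤ e) :
    ((1 + p ^ f : ℕ) : ZMod (p ^ e)) ^ p ^ e = 1 := by
  have h1 := fermat_key p f (by omega) (e - f)
  rw [show f + (e - f) = e from by omega] at h1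
  have h2 : (p : ℤ) ^ e ∣ (1 + (p : ℤ) ^ f) ^ p ^ e - 1 := by
    have h3 : (1 + (p : ℤ) ^ f) ^ p ^ e - 1
        = ((1 + (p : ℤ) ^ f) ^ p ^ (e - f)) ^ p ^ f - 1 ^ p ^ f := by
      rw [← pow_mul, ← pow_add, one_pow, show e - f + f = e from by omega]
    rw [h3]
    exact dvd_trans h1 (sub_dvd_pow_sub_pow _ 1 _)
  have h4 : (((1 + (p : ℤ) ^ f) ^ p ^ e - 1 : ℤ) : ZMod (p ^ e)) = 0 := by
    rw [ZMod.intCast_zmod_eq_zero_iff_dvd]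
    exact_mod_cast h2
  push_cast at h4
  push_cast
  exact sub_eq_zero.mp h4

def fermatAddPerm (m : ℕ) : Multiplicative (ZMod m) →* Equiv.Perm (ZMod m) where
  toFun a := Equiv.addLeft a.toAdd
  map_one' := by ext x; simp
  map_mul' a b := by ext x; simp [add_assoc]

lemma fermatAddPerm_injective (m : ℕ) : Function.Injective (fermatAddPerm m) := by
  intro a b hab
  have h1 := congrArg (fun σ : Equiv.Perm (ZMod m) => σ 0) hab
  have h2 : a.toAdd = b.toAdd := by simpa [fermatAddPerm] using h1
  simpa using congrArg Multiplicative.ofAdd h2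

lemma fermat_ofAdd_pow {m k : ℕ} (hmk : m ∣ k) :
    (Multiplicative.ofAdd (1 : ZMod m)) ^ k = 1 := by
  rw [← ofAdd_nsmul, nsmul_eq_mul, mul_one,
    show ((k : ZMod m)) = 0 from (ZMod.natCast_eq_zero_iff k m).mpr hmk]
  rfl

def fermatZModHom {A : Type*} [CommGroup A] (m : ℕ) (x : A) (hx : x ^ m = 1) :
    Multiplicative (ZMod m) →* A :=
  AddMonoidHom.toMultiplicativeLeft (ZMod.lift m ⟨zmultiplesHom (Additive A) (Additive.ofMul x), by
    simp only [zmultiplesHom_apply]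
    rw [← ofMul_zpow, zpow_natCast, hx, ofMul_one]⟩)

lemma fermatZModHom_apply {A : Type*} [CommGroup A] (m : ℕ) (x : A) (hx : x ^ m = 1) (v : ℤ) :
    fermatZModHom m x hx (Multiplicative.ofAdd ((v : ZMod m))) = x ^ v := by
  have h1 : fermatZModHom m x hx (Multiplicative.ofAdd ((v : ZMod m)))
      = Additive.toMul ((ZMod.lift m ⟨zmultiplesHom (Additive A) (Additive.ofMul x), by
          simp only [zmultiplesHom_apply]
          rw [← ofMul_zpow, zpow_natCast, hx, ofMul_one]⟩) ((v : ZMod m))) := rfl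
  rw [h1, ZMod.lift_coe]
  simp only [zmultiplesHom_apply]
  rw [← ofMul_zpow]
  rfl

end AuxFermat

theorem stmt17 (p e f : ℕ) (hp : p.Prime) (hodd : Odd p) (he : 1 ≤ e)
    (hf1 : 1 ≤ f) (hfe : f ≤ e) (n : ℕ) (hn : n = p ^ e) (q : ℕ) (hq : q = 1 + p ^ f) :
    commutator (Gf n q) = Subgroup.zpowers (hGen n q ^ (p ^ f)) ∧
    Nat.card (Subgroup.zpowers (hGen n q ^ (p ^ f))) = p ^ (e - f) ∧
    Nonempty (Abelianization (Gf n q) ≃*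
      Multiplicative (ZMod n) × Multiplicative (ZMod (p ^ f))) := by
  subst hn hq
  have hp2 := hp.two_le
  have hppos : 0 < p := by omega
  have hpfne : p ^ f ≠ 0 := (pow_pos hppos f).ne'
  have hne : (p ^ e) ≠ 0 := (pow_pos hppos e).ne'
  haveI : NeZero (p ^ e) := ⟨hne⟩
  have hdvd_fe : p ^ f ∣ p ^ e := pow_dvd_pow p hfe
  -- coprimality of q = 1 + p^f with p^e
  have hpd : ¬ p ∣ 1 + p ^ f := by
    intro hd
    have h1 : p ∣ p ^ f := dvd_pow_self p (by omega)
    have h2 : p ∣ 1 := (Nat.dvd_add_right h1).mp (by rwa [add_comm] at hd)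
    exact absurd (Nat.le_of_dvd one_pos h2) (by omega)
  have hco : Nat.Coprime (1 + p ^ f) (p ^ e) :=
    Nat.Coprime.pow_right e (Nat.coprime_comm.mp (hp.coprime_iff_not_dvd.mpr hpd))
  have hq1 : ((1 + p ^ f : ℕ) : ZMod (p ^ e)) ^ p ^ e = 1 := fermat_q_pow p e f hf1 hfe
  -- units
  set w : (ZMod (p ^ e))ˣ := ZMod.unitOfCoprime (1 + p ^ f) hco with hw
  have hwval : (w : ZMod (p ^ e)) = ((1 + p ^ f : ℕ) : ZMod (p ^ e)) :=
    ZMod.coe_unitOfCoprime _ _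
  have hwn : w ^ p ^ e = 1 := by
    apply Units.ext
    rw [Units.val_pow_eq_pow_val, hwval, hq1, Units.val_one]
  set u : (ZMod (p ^ e))ˣ := w⁻¹ with hu
  have hun : u ^ p ^ e = 1 := by rw [hu, inv_pow, hwn, inv_one]
  have huval : ((u⁻¹ : (ZMod (p ^ e))ˣ) : ZMod (p ^ e)) = ((1 + p ^ f : ℕ) : ZMod (p ^ e)) := by
    rw [hu, inv_inv, hwval]
  -- the permutation representation
  obtain ⟨φ, hφg, hφh⟩ :
      ∃ φ : Gf (p ^ e) (1 + p ^ f) →* Equiv.Perm (ZMod (p ^ e)),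
        φ (gGen (p ^ e) (1 + p ^ f)) = MulAction.toPermHom (ZMod (p ^ e))ˣ (ZMod (p ^ e)) u ∧
        φ (hGen (p ^ e) (1 + p ^ f)) = fermatAddPerm (p ^ e) (Multiplicative.ofAdd 1) := by
    refine ⟨PresentedGroup.toGroup
        (f := ![MulAction.toPermHom (ZMod (p ^ e))ˣ (ZMod (p ^ e)) u,
                fermatAddPerm (p ^ e) (Multiplicative.ofAdd 1)]) ?_, ?_, ?_⟩
    · intro r hr
      simp only [fermatRels, Set.mem_insert_iff, Set.mem_singleton_iff] at hr
      rcases hr with rfl | rfl | rfl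
      · rw [map_pow, FreeGroup.lift_apply_of, Matrix.cons_val_zero, ← map_pow, hun, map_one]
      · rw [map_pow, FreeGroup.lift_apply_of, Matrix.cons_val_one, Matrix.cons_val_zero, ← map_pow,
          fermat_ofAdd_pow dvd_rfl, map_one]
      · simp only [map_mul, map_inv, map_pow, FreeGroup.lift_apply_of, Matrix.cons_val_zero,
          Matrix.cons_val_one, Matrix.head_cons]
        rw [← map_pow, ← map_inv (fermatAddPerm (p ^ e)),
          ← map_inv (MulAction.toPermHom (ZMod (p ^ e))ˣ (ZMod (p ^ e)))]
        apply Equiv.ext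
        intro x
        simp only [Equiv.Perm.mul_apply, MulAction.toPermHom_apply, MulAction.toPerm_apply,
          fermatAddPerm, MonoidHom.coe_mk, OneHom.coe_mk, Equiv.coe_addLeft,
          Equiv.Perm.coe_one, id_eq, Units.smul_def, smul_eq_mul]
        rw [mul_add, ← mul_assoc, ← Units.val_mul, inv_mul_cancel, Units.val_one, one_mul,
          huval]
        -- goal should now be: q * (toAdd (ofAdd 1)) + (toAdd ((ofAdd 1 ^ (1+p^f))⁻¹) + x) = x
        rw [toAdd_ofAdd]
        have hqe : Multiplicative.toAdd ((Multiplicative.ofAdd (1 : ZMod (p ^ e)) ^ (1 + p ^ f))⁻¹)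
            = -((1 + p ^ f : ℕ) : ZMod (p ^ e)) := by
          rw [← ofAdd_nsmul, nsmul_eq_mul, mul_one]
          rfl
        rw [hqe, mul_one]
        ring
    · show PresentedGroup.toGroup _ (PresentedGroup.of 0) = _
      rw [PresentedGroup.toGroup.of, Matrix.cons_val_zero]
    · show PresentedGroup.toGroup _ (PresentedGroup.of 1) = _
      rw [PresentedGroup.toGroup.of, Matrix.cons_val_one, Matrix.cons_val_zero]
  -- order of h
  have horderh : orderOf (hGen (p ^ e) (1 + p ^ f)) = p ^ e := by
    have h1 : orderOf (φ (hGen (p ^ e) (1 + p ^ f))) = p ^ e := by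
      rw [hφh, orderOf_injective (fermatAddPerm (p ^ e)) (fermatAddPerm_injective _),
        orderOf_ofAdd_eq_addOrderOf, ZMod.addOrderOf_one]
    exact Nat.dvd_antisymm (orderOf_dvd_of_pow_eq_one fermat_relh)
      ((dvd_of_eq h1.symm).trans (orderOf_map_dvd φ _))
  have horderw : orderOf (hGen (p ^ e) (1 + p ^ f) ^ p ^ f) = p ^ (e - f) := by
    rw [orderOf_pow' _ hpfne, horderh, Nat.gcd_comm, Nat.gcd_eq_left hdvd_fe]
    exact Nat.pow_div hfe hppos
  have hcard : Nat.card (Subgroup.zpowers (hGen (p ^ e) (1 + p ^ f) ^ p ^ f)) = p ^ (e - f) := by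
    rw [Nat.card_zpowers, horderw]
  -- h^(p^f) is a commutator
  have hkey : hGen (p ^ e) (1 + p ^ f) ^ p ^ f
      = (hGen (p ^ e) (1 + p ^ f))⁻¹ * (gGen (p ^ e) (1 + p ^ f))⁻¹
        * hGen (p ^ e) (1 + p ^ f) * gGen (p ^ e) (1 + p ^ f) := by
    have h1 := fermat_relc (n := p ^ e) (q := 1 + p ^ f)
    calc hGen (p ^ e) (1 + p ^ f) ^ p ^ f
        = (hGen (p ^ e) (1 + p ^ f))⁻¹ * hGen (p ^ e) (1 + p ^ f) ^ (1 + p ^ f) := by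
          rw [pow_add, pow_one, ← mul_assoc, inv_mul_cancel, one_mul]
      _ = (hGen (p ^ e) (1 + p ^ f))⁻¹ * ((gGen (p ^ e) (1 + p ^ f))⁻¹
            * hGen (p ^ e) (1 + p ^ f) * gGen (p ^ e) (1 + p ^ f)) := by rw [h1]
      _ = _ := by group
  have hmemcomm : hGen (p ^ e) (1 + p ^ f) ^ p ^ f ∈ commutator (Gf (p ^ e) (1 + p ^ f)) := by
    have h2 : hGen (p ^ e) (1 + p ^ f) ^ p ^ f
        = (open scoped commutatorElement in ⁅(hGen (p ^ e) (1 + p ^ f))⁻¹, (gGen (p ^ e) (1 + p ^ f))⁻¹⁆) := by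
      rw [commutatorElement_def, inv_inv, inv_inv]
      exact hkey
    rw [commutator_def, h2]
    exact Subgroup.commutator_mem_commutator (Subgroup.mem_top _) (Subgroup.mem_top _)
  -- the inverse multiplier c
  set c : ℕ := ZMod.val (u : ZMod (p ^ e)) with hc
  have hmod : ((1 + p ^ f) * c : ℕ) ≡ 1 [MOD p ^ e] := by
    have h1 : (((1 + p ^ f) * c : ℕ) : ZMod (p ^ e)) = ((1 : ℕ) : ZMod (p ^ e)) := by
      rw [Nat.cast_mul, Nat.cast_one]
      have h2 : ((c : ℕ) : ZMod (p ^ e)) = (u : ZMod (p ^ e)) := by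
        rw [hc]
        exact ZMod.natCast_rightInverse _
      rw [h2, ← hwval, hu, ← Units.val_mul, mul_inv_cancel, Units.val_one]
    exact (ZMod.natCast_eq_natCast_iff _ _ _).mp h1
  have hmodz : ((1 + p ^ f : ℕ) : ℤ) * (c : ℤ) ≡ 1 [ZMOD (p ^ e : ℕ)] := by
    have := Int.natCast_modEq_iff.mpr hmod
    push_cast at this
    exact_mod_cast this
  -- conjugation formulas with integer exponents
  have conj1 : ∀ m : ℤ, (gGen (p ^ e) (1 + p ^ f))⁻¹ * hGen (p ^ e) (1 + p ^ f) ^ m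
      * gGen (p ^ e) (1 + p ^ f) = hGen (p ^ e) (1 + p ^ f) ^ (((1 + p ^ f : ℕ) : ℤ) * m) :=
    fun m => fermat_conj_zpow m
  have hzpow_eq : ∀ a b : ℤ, a ≡ b [ZMOD (p ^ e : ℕ)] →
      hGen (p ^ e) (1 + p ^ f) ^ a = hGen (p ^ e) (1 + p ^ f) ^ b := by
    intro a b hab
    apply zpow_eq_zpow_iff_modEq.mpr
    rw [horderh]
    exact hab
  have conj2 : ∀ m : ℤ, gGen (p ^ e) (1 + p ^ f) * hGen (p ^ e) (1 + p ^ f) ^ m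
      * (gGen (p ^ e) (1 + p ^ f))⁻¹ = hGen (p ^ e) (1 + p ^ f) ^ ((c : ℤ) * m) := by
    intro m
    have h1 : (gGen (p ^ e) (1 + p ^ f))⁻¹ * hGen (p ^ e) (1 + p ^ f) ^ ((c : ℤ) * m)
        * gGen (p ^ e) (1 + p ^ f) = hGen (p ^ e) (1 + p ^ f) ^ m := by
      rw [conj1]
      apply hzpow_eq
      have h2 := hmodz.mul_right m
      rw [one_mul] at h2
      calc ((1 + p ^ f : ℕ) : ℤ) * ((c : ℤ) * m) = ((1 + p ^ f : ℕ) : ℤ) * (c : ℤ) * m := by ring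
        _ ≡ m [ZMOD (p ^ e : ℕ)] := h2
    calc gGen (p ^ e) (1 + p ^ f) * hGen (p ^ e) (1 + p ^ f) ^ m * (gGen (p ^ e) (1 + p ^ f))⁻¹
        = gGen (p ^ e) (1 + p ^ f) * ((gGen (p ^ e) (1 + p ^ f))⁻¹
            * hGen (p ^ e) (1 + p ^ f) ^ ((c : ℤ) * m) * gGen (p ^ e) (1 + p ^ f))
            * (gGen (p ^ e) (1 + p ^ f))⁻¹ := by rw [h1]
      _ = hGen (p ^ e) (1 + p ^ f) ^ ((c : ℤ) * m) := by group
  -- zpowers rewriting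
  have hwpow : ∀ k : ℤ, (hGen (p ^ e) (1 + p ^ f) ^ p ^ f) ^ k
      = hGen (p ^ e) (1 + p ^ f) ^ (((p ^ f : ℕ) : ℤ) * k) := by
    intro k
    rw [← zpow_natCast (hGen (p ^ e) (1 + p ^ f)) (p ^ f), ← zpow_mul]
  set Z := Subgroup.zpowers (hGen (p ^ e) (1 + p ^ f) ^ p ^ f) with hZ
  have hZnormal : Z.Normal := by
    apply Subgroup.normalizer_eq_top_iff.mp
    rw [eq_top_iff, ← fermat_closure (n := p ^ e) (q := 1 + p ^ f), Subgroup.closure_le]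
    intro x hx
    simp only [Set.mem_insert_iff, Set.mem_singleton_iff] at hx
    rcases hx with rfl | rfl
    · rw [SetLike.mem_coe, Subgroup.mem_normalizer_iff]
      intro z
      constructor
      · intro hz
        obtain ⟨k, hk⟩ := Subgroup.mem_zpowers_iff.mp hz
        rw [← hk, hwpow, conj2]
        exact Subgroup.mem_zpowers_iff.mpr ⟨(c : ℤ) * k, by rw [hwpow]; congr 1; ring⟩
      · intro hz
        obtain ⟨k, hk⟩ := Subgroup.mem_zpowers_iff.mp hz
        have h2 : z = (gGen (p ^ e) (1 + p ^ f))⁻¹ * (hGen (p ^ e) (1 + p ^ f) ^ p ^ f) ^ k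
            * gGen (p ^ e) (1 + p ^ f) := by
          rw [hk]; group
        rw [h2, hwpow, conj1]
        exact Subgroup.mem_zpowers_iff.mpr ⟨((1 + p ^ f : ℕ) : ℤ) * k, by rw [hwpow]; congr 1; ring⟩
    · rw [SetLike.mem_coe, Subgroup.mem_normalizer_iff]
      intro z
      have hcz : ∀ y, y ∈ Z → Commute (hGen (p ^ e) (1 + p ^ f)) y := by
        intro y hy
        obtain ⟨k, hk⟩ := Subgroup.mem_zpowers_iff.mp hy
        rw [← hk, hwpow]
        exact (Commute.refl _).zpow_right _
      have hconj_id : ∀ y, y ∈ Z → hGen (p ^ e) (1 + p ^ f) * y * (hGen (p ^ e) (1 + p ^ f))⁻¹ = y := by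
        intro y hy
        rw [(hcz y hy).eq, mul_assoc, mul_inv_cancel, mul_one]
      constructor
      · intro hz; rw [hconj_id z hz]; exact hz
      · intro hz
        have h4 : z = (hGen (p ^ e) (1 + p ^ f))⁻¹ * (hGen (p ^ e) (1 + p ^ f) * z
            * (hGen (p ^ e) (1 + p ^ f))⁻¹) * hGen (p ^ e) (1 + p ^ f) := by group
        rw [h4, (hcz _ hz).inv_left.eq, mul_assoc, inv_mul_cancel, mul_one]
        exact hz
  haveI := hZnormal
  -- the quotient is commutative
  have hπcomm : (QuotientGroup.mk' Z) (gGen (p ^ e) (1 + p ^ f)) * (QuotientGroup.mk' Z) (hGen (p ^ e) (1 + p ^ f))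
      = (QuotientGroup.mk' Z) (hGen (p ^ e) (1 + p ^ f)) * (QuotientGroup.mk' Z) (gGen (p ^ e) (1 + p ^ f)) := by
    rw [← map_mul, ← map_mul]
    apply (QuotientGroup.mk'_eq_mk' Z).mpr
    refine ⟨hGen (p ^ e) (1 + p ^ f) ^ p ^ f, Subgroup.mem_zpowers _, ?_⟩
    rw [hkey]
    group
  have hQcomm : ∀ x y : Gf (p ^ e) (1 + p ^ f) ⧸ Z, x * y = y * x := by
    have hgen : Subgroup.closure ({(QuotientGroup.mk' Z) (gGen (p ^ e) (1 + p ^ f)),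
        (QuotientGroup.mk' Z) (hGen (p ^ e) (1 + p ^ f))} : Set (Gf (p ^ e) (1 + p ^ f) ⧸ Z)) = ⊤ := by
      have h1 : ({(QuotientGroup.mk' Z) (gGen (p ^ e) (1 + p ^ f)),
          (QuotientGroup.mk' Z) (hGen (p ^ e) (1 + p ^ f))} : Set (Gf (p ^ e) (1 + p ^ f) ⧸ Z))
          = (QuotientGroup.mk' Z) '' {gGen (p ^ e) (1 + p ^ f), hGen (p ^ e) (1 + p ^ f)} := by
        rw [Set.image_insert_eq, Set.image_singleton]
      rw [h1, ← MonoidHom.map_closure, fermat_closure]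
      exact Subgroup.map_top_of_surjective _ (QuotientGroup.mk'_surjective Z)
    intro x y
    have hx : x ∈ Subgroup.closure ({(QuotientGroup.mk' Z) (gGen (p ^ e) (1 + p ^ f)),
        (QuotientGroup.mk' Z) (hGen (p ^ e) (1 + p ^ f))} : Set (Gf (p ^ e) (1 + p ^ f) ⧸ Z)) := by
      rw [hgen]; trivial
    have hy : y ∈ Subgroup.closure ({(QuotientGroup.mk' Z) (gGen (p ^ e) (1 + p ^ f)),
        (QuotientGroup.mk' Z) (hGen (p ^ e) (1 + p ^ f))} : Set (Gf (p ^ e) (1 + p ^ f) ⧸ Z)) := by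
      rw [hgen]; trivial
    refine Subgroup.closure_induction₂ (p := fun a b _ _ => a * b = b * a)
      ?_ ?_ ?_ ?_ ?_ ?_ ?_ hx hy
    · intro a b ha hb
      simp only [Set.mem_insert_iff, Set.mem_singleton_iff] at ha hb
      rcases ha with rfl | rfl <;> rcases hb with rfl | rfl
      · rfl
      · exact hπcomm
      · exact hπcomm.symm
      · rfl
    · intro a _; rw [one_mul, mul_one]
    · intro a _; rw [one_mul, mul_one]
    · intro a b z _ _ _ h1 h2
      rw [mul_assoc, h2, ← mul_assoc, h1, mul_assoc]
    · intro a b z _ _ _ h1 h2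
      rw [← mul_assoc, h1, mul_assoc, h2, ← mul_assoc]
    · intro a b _ _ h1
      exact (Commute.inv_left h1 : Commute a⁻¹ b)
    · intro a b _ _ h1
      exact (Commute.inv_right h1 : Commute a b⁻¹)
  letI : CommGroup (Gf (p ^ e) (1 + p ^ f) ⧸ Z) :=
    { (inferInstance : Group (Gf (p ^ e) (1 + p ^ f) ⧸ Z)) with mul_comm := hQcomm }
  have hcommle : commutator (Gf (p ^ e) (1 + p ^ f)) ≤ Z := by
    have h1 := Abelianization.commutator_subset_ker (QuotientGroup.mk' Z)
    rwa [QuotientGroup.ker_mk'] at h1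
  have hpart1 : commutator (Gf (p ^ e) (1 + p ^ f)) = Z :=
    le_antisymm hcommle (Subgroup.zpowers_le.mpr hmemcomm)
  refine ⟨hpart1, hcard, ?_⟩
  haveI : NeZero (p ^ f) := ⟨hpfne⟩
  -- the abelianized representation
  obtain ⟨ψ, hψg, hψh⟩ :
      ∃ ψ : Gf (p ^ e) (1 + p ^ f) →* Multiplicative (ZMod (p ^ e)) × Multiplicative (ZMod (p ^ f)),
        ψ (gGen (p ^ e) (1 + p ^ f)) = (Multiplicative.ofAdd (1 : ZMod (p ^ e)), 1) ∧
        ψ (hGen (p ^ e) (1 + p ^ f)) = (1, Multiplicative.ofAdd (1 : ZMod (p ^ f))) := by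
    refine ⟨PresentedGroup.toGroup
        (f := ![(Multiplicative.ofAdd (1 : ZMod (p ^ e)), 1),
                (1, Multiplicative.ofAdd (1 : ZMod (p ^ f)))]) ?_, ?_, ?_⟩
    · intro r hr
      simp only [fermatRels, Set.mem_insert_iff, Set.mem_singleton_iff] at hr
      rcases hr with rfl | rfl | rfl
      · rw [map_pow, FreeGroup.lift_apply_of, Matrix.cons_val_zero]
        refine Prod.ext ?_ ?_
        · rw [Prod.pow_fst, Prod.fst_one]
          exact fermat_ofAdd_pow dvd_rfl
        · rw [Prod.pow_snd, Prod.snd_one, one_pow]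
      · rw [map_pow, FreeGroup.lift_apply_of, Matrix.cons_val_one, Matrix.cons_val_zero]
        refine Prod.ext ?_ ?_
        · rw [Prod.pow_fst, Prod.fst_one, one_pow]
        · rw [Prod.pow_snd, Prod.snd_one]
          exact fermat_ofAdd_pow hdvd_fe
      · simp only [map_mul, map_inv, map_pow, FreeGroup.lift_apply_of, Matrix.cons_val_zero,
          Matrix.cons_val_one, Matrix.head_cons]
        have hofq : (Multiplicative.ofAdd (1 : ZMod (p ^ f))) ^ (1 + p ^ f)
            = Multiplicative.ofAdd (1 : ZMod (p ^ f)) := by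
          rw [← ofAdd_nsmul, nsmul_eq_mul, mul_one]
          congr 1
          push_cast
          rw [show ((p : ZMod (p ^ f)) ^ f) = 0 from by rw [← Nat.cast_pow, ZMod.natCast_self],
            add_zero]
        refine Prod.ext ?_ ?_
        · simp
        · simp [hofq]
    · show PresentedGroup.toGroup _ (PresentedGroup.of 0) = _
      rw [PresentedGroup.toGroup.of, Matrix.cons_val_zero]
    · show PresentedGroup.toGroup _ (PresentedGroup.of 1) = _
      rw [PresentedGroup.toGroup.of, Matrix.cons_val_one, Matrix.cons_val_zero]
  have hof_g_pow : Abelianization.of (gGen (p ^ e) (1 + p ^ f)) ^ p ^ e = 1 := by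
    rw [← map_pow, fermat_relg, map_one]
  have hof_h_pow : Abelianization.of (hGen (p ^ e) (1 + p ^ f)) ^ p ^ f = 1 := by
    rw [← map_pow]
    exact (QuotientGroup.eq_one_iff _).mpr hmemcomm
  refine ⟨MonoidHom.toMulEquiv (Abelianization.lift ψ)
    ((fermatZModHom (p ^ e) (Abelianization.of (gGen (p ^ e) (1 + p ^ f))) hof_g_pow).coprod
     (fermatZModHom (p ^ f) (Abelianization.of (hGen (p ^ e) (1 + p ^ f))) hof_h_pow)) ?_ ?_⟩
  · apply Abelianization.hom_ext
    apply PresentedGroup.ext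
    intro i
    fin_cases i
    · simp only [MonoidHom.comp_apply, MonoidHom.id_apply]
      rw [show (PresentedGroup.of (rels := fermatRels (p ^ e) (1 + p ^ f)) (⟨0, by omega⟩ : Fin 2))
          = gGen (p ^ e) (1 + p ^ f) from rfl]
      rw [Abelianization.lift_apply_of, hψg, MonoidHom.coprod_apply]
      rw [show (Multiplicative.ofAdd (1 : ZMod (p ^ e)))
          = Multiplicative.ofAdd (((1 : ℤ) : ZMod (p ^ e))) from by norm_num]
      rw [fermatZModHom_apply]
      simp
    · simp only [MonoidHom.comp_apply, MonoidHom.id_apply]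
      rw [show (PresentedGroup.of (rels := fermatRels (p ^ e) (1 + p ^ f)) (⟨1, by omega⟩ : Fin 2))
          = hGen (p ^ e) (1 + p ^ f) from rfl]
      rw [Abelianization.lift_apply_of, hψh, MonoidHom.coprod_apply]
      rw [show (Multiplicative.ofAdd (1 : ZMod (p ^ f)))
          = Multiplicative.ofAdd (((1 : ℤ) : ZMod (p ^ f))) from by norm_num]
      rw [fermatZModHom_apply]
      simp
  · apply MonoidHom.ext
    rintro ⟨a, b⟩
    simp only [MonoidHom.comp_apply, MonoidHom.id_apply, MonoidHom.coprod_apply]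
    obtain ⟨va, hva⟩ : ∃ v : ℤ, a = Multiplicative.ofAdd ((v : ZMod (p ^ e))) := by
      refine ⟨((a.toAdd.val : ℕ) : ℤ), ?_⟩
      have h1 : ((a.toAdd.val : ℕ) : ZMod (p ^ e)) = a.toAdd := ZMod.natCast_rightInverse _
      rw [Int.cast_natCast, h1]
      simp
    obtain ⟨vb, hvb⟩ : ∃ v : ℤ, b = Multiplicative.ofAdd ((v : ZMod (p ^ f))) := by
      refine ⟨((b.toAdd.val : ℕ) : ℤ), ?_⟩
      have h1 : ((b.toAdd.val : ℕ) : ZMod (p ^ f)) = b.toAdd := ZMod.natCast_rightInverse _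
      rw [Int.cast_natCast, h1]
      simp
    rw [hva, hvb, fermatZModHom_apply, fermatZModHom_apply, map_mul, map_zpow, map_zpow,
      Abelianization.lift_apply_of, Abelianization.lift_apply_of, hψg, hψh]
    refine Prod.ext ?_ ?_
    · rw [Prod.fst_mul, Prod.pow_fst, Prod.pow_fst, one_zpow, mul_one, ← ofAdd_zsmul]
      congr 1
      rw [zsmul_eq_mul, mul_one]
    · rw [Prod.snd_mul, Prod.pow_snd, Prod.pow_snd, one_zpow, one_mul, ← ofAdd_zsmul]
      congr 1
      rw [zsmul_eq_mul, mul_one]
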